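/- For 2×2 matrices A and B, det(A ⊗ I₂ ± I₂ ⊗ B) = (det A - det B)² + det A · (tr B)² + det B · (tr A)² ± (det A + det B) · tr A · tr B, where ⊗ denotes the Kronecker product and I₂ is the 2×2 identity matrix. -/

import Mathlib

open Matrix Kronecker

set_option maxHeartbeats 1000000 in
/-- For 2×2 matrices `A`, `B` over a commutative ring,
`det(A ⊗ I₂ ± I₂ ⊗ B) = (det A - det B)² + det A (tr B)² + det B (tr A)²
  ± (det A + det B) tr A tr B`. -/
theorem stmt5 {R : Type*} [CommRing R] (A B : Matrix (Fin 2) (Fin 2) R) :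
    (A ⊗ₖ (1 : Matrix (Fin 2) (Fin 2) R) + (1 : Matrix (Fin 2) (Fin 2) R) ⊗ₖ B).det
      = (A.det - B.det) ^ 2 + A.det * (B.trace) ^ 2 + B.det * (A.trace) ^ 2
        + (A.det + B.det) * A.trace * B.trace ∧
    (A ⊗ₖ (1 : Matrix (Fin 2) (Fin 2) R) - (1 : Matrix (Fin 2) (Fin 2) R) ⊗ₖ B).det
      = (A.det - B.det) ^ 2 + A.det * (B.trace) ^ 2 + B.det * (A.trace) ^ 2
        - (A.det + B.det) * A.trace * B.trace := by
  constructor <;>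
  · rw [← Matrix.det_reindex_self finProdFinEquiv]
    simp [Matrix.det_succ_row_zero, Fin.sum_univ_succ, Matrix.det_fin_two,
      Matrix.trace_fin_two, Matrix.kroneckerMap_apply, Matrix.one_apply,
      finProdFinEquiv, Fin.divNat, Fin.modNat, Fin.ext_iff, Fin.succAbove]
    ring
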